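/- Main theorem, common-vertex case: let λ be a bilinking form under which K_V (|V| = m ≥ 5) and K_W (|W| = n ≥ 5) are weakly linked, with p ∈ V common to all triangles of V linking W and q ∈ W common to all triangles of W linking V. Then there exist ℓ with 2 ≤ ℓ ≤ min{m,n} − 1, a partition {X₀,…,X_{ℓ−1}} of V − {p}, and a partition {Y₀,…,Y_{ℓ−1}} of W − {q}, such that: (i) a triangle (p,x,y) of V links W iff x and y lie in different parts X_i; (ii) a triangle (q,u,v) of W links V iff u and v lie in different parts Y_i; (iii) for x_j ∈ X_j, x_k ∈ X_k with j < k, the triangle (p,x_j,x_k) links W in the star qO_{jk}I_{jk} with O_{jk} = Y_j ∪ ⋯ ∪ Y_{k−1} and I_{jk} its complement in W − {q}; and (iv) for y_j ∈ Y_j, y_k ∈ Y_k with j < k, the triangle (q,y_j,y_k) links V in the star pP_{jk}J_{jk} with J_{jk} = X_{j+1} ∪ ⋯ ∪ X_k and P_{jk} its complement in V − {p}. -/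

import Mathlib

open scoped Classical

section Defs

variable {V : Type*} {W : Type*}

/-- A map `V³ → ℤ` alternating in its arguments. -/
def IsAlt (f : V → V → V → ℤ) : Prop :=
  (∀ a b c, f b a c = - f a b c) ∧ (∀ a b c, f a c b = - f a b c)

/-- The simplicial cocycle identity. -/
def IsCocycle (f : V → V → V → ℤ) : Prop :=
  ∀ a b c d, f b c d - f a c d + f a b d - f a b c = 0

/-- A linking function on `V`. -/
def IsLinkingFun (f : V → V → V → ℤ) : Prop := IsAlt f ∧ IsCocycle f

/-- A cycle in the complete graph on `V`: a list of at least 3 distinct vertices. -/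
def IsCycle (C : List V) : Prop := C.Nodup ∧ 3 ≤ C.length

/-- The value of `f` on a cycle, via the standard triangulation
`f(C) = ∑_{i=1}^{k-2} f(v₀, vᵢ, vᵢ₊₁)`. -/
def cycleVal (f : V → V → V → ℤ) : List V → ℤ
  | [] => 0
  | v :: rest => ∑ i ∈ Finset.range (rest.length - 1),
      f v (rest.getD i v) (rest.getD (i + 1) v)

/-- `f` is weak: `|f(C)| ≤ 1` for every cycle `C`. -/
def IsWeak (f : V → V → V → ℤ) : Prop :=
  ∀ C : List V, IsCycle C → |cycleVal f C| ≤ 1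

/-- `f` is nontrivial: `f(C) ≠ 0` for some cycle `C`. -/
def IsNontrivial (f : V → V → V → ℤ) : Prop :=
  ∃ C : List V, IsCycle C ∧ cycleVal f C ≠ 0

noncomputable def starEdge (O I : Set V) (x y : V) : ℤ :=
  (if x ∈ O ∧ y ∈ I then 1 else 0) - (if x ∈ I ∧ y ∈ O then 1 else 0)

/-- The star function `pOI`: the alternating function with value `1` on `(p,q,r)`
for `q ∈ O`, `r ∈ I`, and value `0` on triples not of this form up to reorientation. -/
noncomputable def starFun (p : V) (O I : Set V) (a b c : V) : ℤ :=
  (if a = p then starEdge O I b c else 0)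
    - (if b = p then starEdge O I a c else 0)
    + (if c = p then starEdge O I a b else 0)

/-- `({p}, O, I)` is an ordered partition of `V` into three nonempty parts. -/
def IsStarPartition (p : V) (O I : Set V) : Prop :=
  O.Nonempty ∧ I.Nonempty ∧ p ∉ O ∧ p ∉ I ∧ Disjoint O I ∧
    insert p (O ∪ I) = (Set.univ : Set V)

/-- A bilinking form between `V` and `W`. -/
def IsBilinking (lam : V → V → V → W → W → W → ℤ) : Prop :=
  (∀ u v w, IsLinkingFun (fun a b c => lam a b c u v w)) ∧
  (∀ a b c, IsLinkingFun (lam a b c))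

/-- The value of a bilinking form on a pair of cycles. -/
def biCycleVal (lam : V → V → V → W → W → W → ℤ) (C : List V) (D : List W) : ℤ :=
  cycleVal (fun a b c => cycleVal (lam a b c) D) C

/-- `K_V` and `K_W` are weakly linked under `lam`. -/
def WeaklyLinked (lam : V → V → V → W → W → W → ℤ) : Prop :=
  (∀ (C : List V) (D : List W), IsCycle C → IsCycle D → |biCycleVal lam C D| ≤ 1) ∧
  ∃ (C : List V) (D : List W), IsCycle C ∧ IsCycle D ∧ biCycleVal lam C D ≠ 0

end Defs

section AuxHelpers

variable {V : Type*}

theorem myAlt_self1 (f : V → V → V → ℤ) (h : IsAlt f) (a c : V) : f a a c = 0 := by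
  have := h.1 a a c; omega

theorem myAlt_self2 (f : V → V → V → ℤ) (h : IsAlt f) (a b : V) : f a b b = 0 := by
  have := h.2 a b b; omega

theorem myAlt_self3 (f : V → V → V → ℤ) (h : IsAlt f) (a b : V) : f a b a = 0 := by
  have h1 := h.2 a b a
  have h2 := myAlt_self1 f h a b
  omega

theorem myCycleVal_triangle (f : V → V → V → ℤ) (a b c : V) :
    cycleVal f [a, b, c] = f a b c := by
  simp [cycleVal]

theorem myCycleVal_zero (f : V → V → V → ℤ) (h : ∀ a b c, f a b c = 0) (C : List V) :
    cycleVal f C = 0 := by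
  cases C with
  | nil => rfl
  | cons v rest => simp [cycleVal, h]

theorem myIsCycle_triangle (a b c : V) (hab : a ≠ b) (hac : a ≠ c) (hbc : b ≠ c) :
    IsCycle [a, b, c] := by
  constructor
  · simp [hab, hac, hbc]
  · simp

/-- Expansion of an alternating function vanishing off `p`. -/
theorem myExpand (p : V) (f : V → V → V → ℤ) (halt : IsAlt f)
    (h0 : ∀ a b c, a ≠ p → b ≠ p → c ≠ p → f a b c = 0) (a b c : V) :
    f a b c = (if a = p then f p b c else 0) - (if b = p then f p a c else 0)
      + (if c = p then f p a b else 0) := by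
  by_cases ha : a = p
  · rw [ha]
    have h1 : f p p c = 0 := myAlt_self1 f halt p c
    have h2 : f p p b = 0 := myAlt_self1 f halt p b
    simp only [if_pos rfl, h1, h2]
    simp
  · by_cases hb : b = p
    · rw [hb]
      have h1 : f a p c = - f p a c := halt.1 p a c
      have h2 : f p a p = 0 := myAlt_self3 f halt p a
      simp only [if_neg ha, if_pos rfl, h2]
      simp only [ite_self, if_true, ite_true]
      omega
    · by_cases hc : c = p
      · rw [hc]
        have h1 : f a b p = - f a p b := halt.2 a p b
        have h2 : f a p b = - f p a b := halt.1 p a b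
        simp only [if_neg ha, if_neg hb, if_pos rfl, if_true, ite_true]
        omega
      · simp only [if_neg ha, if_neg hb, if_neg hc]
        have := h0 a b c ha hb hc
        omega

end AuxHelpers


theorem core {A B : Type*} [Fintype A] [Fintype B] [Nonempty A] [Nonempty B]
    (g : A → A → B → B → ℤ)
    (alt1 : ∀ x y u v, g y x u v = - g x y u v)
    (alt2 : ∀ x y u v, g x y v u = - g x y u v)
    (add1 : ∀ x y z u v, g x y u v + g y z u v = g x z u v)
    (add2 : ∀ x y u v w, g x y u v + g x y v w = g x y u w)
    (bd : ∀ x y u v, |g x y u v| ≤ 1)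
    (nt : ∃ x y u v, g x y u v ≠ 0) :
    ∃ ℓ : ℕ, 2 ≤ ℓ ∧ ∃ (s : A → Fin ℓ) (t : B → Fin ℓ),
      Function.Surjective s ∧ Function.Surjective t ∧
      ∀ x y u v, g x y u v =
        ((if (t u : ℕ) < (s y : ℕ) then (1:ℤ) else 0)
          - (if (t u : ℕ) < (s x : ℕ) then 1 else 0))
        - ((if (t v : ℕ) < (s y : ℕ) then (1:ℤ) else 0)
          - (if (t v : ℕ) < (s x : ℕ) then 1 else 0)) := by
  obtain ⟨x₁⟩ := ‹Nonempty A›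
  set S : A → Finset B := fun x => Finset.univ.filter (fun v => ∃ u, g x x₁ u v = 1) with hS
  have memS : ∀ x v, v ∈ S x ↔ ∃ u, g x x₁ u v = 1 := by
    intro x v; simp [hS]
  -- the cut lemma
  have cut : ∀ x u v, g x x₁ u v =
      (if v ∈ S x then (1:ℤ) else 0) - (if u ∈ S x then 1 else 0) := by
    intro x u v
    have habs : ∀ a b : B, -1 ≤ g x x₁ a b ∧ g x x₁ a b ≤ 1 := by
      intro a b; have := bd x x₁ a b; constructor <;> [linarith [abs_le.1 this]; linarith [abs_le.1 this]]
    by_cases hv : v ∈ S x <;> by_cases hu : u ∈ S x <;>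
      simp only [hv, hu, if_true, if_false]
    · -- both in S x : value 0
      obtain ⟨a, ha⟩ := (memS x v).1 hv
      obtain ⟨b, hb⟩ := (memS x u).1 hu
      have e1 : g x x₁ u a + g x x₁ a v = g x x₁ u v := add2 x x₁ u a v
      have e2 : g x x₁ b u + g x x₁ u v = g x x₁ b v := add2 x x₁ b u v
      have h1 := habs u a
      have h2 := habs b v
      omega
    · -- v ∈ S x, u ∉ S x : value 1
      obtain ⟨a, ha⟩ := (memS x v).1 hv
      have e1 : g x x₁ u a + g x x₁ a v = g x x₁ u v := add2 x x₁ u a v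
      have h1 := habs u v
      have h2 : ¬ ∃ b, g x x₁ b u = 1 := fun h => hu ((memS x u).2 h)
      have h3 : g x x₁ a u = - g x x₁ u a := alt2 x x₁ u a
      have h4 : g x x₁ a u ≠ 1 := fun h => h2 ⟨a, h⟩
      have h5 := habs u a
      omega
    · -- v ∉ S x, u ∈ S x : value -1
      obtain ⟨b, hb⟩ := (memS x u).1 hu
      have e1 : g x x₁ v b + g x x₁ b u = g x x₁ v u := add2 x x₁ v b u
      have h1 := habs v u
      have h2 : ¬ ∃ a, g x x₁ a v = 1 := fun h => hv ((memS x v).2 h)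
      have h3 : g x x₁ b v = - g x x₁ v b := alt2 x x₁ v b
      have h4 : g x x₁ b v ≠ 1 := fun h => h2 ⟨b, h⟩
      have h5 : g x x₁ u v = - g x x₁ v u := alt2 x x₁ v u
      have h6 := habs v b
      omega
    · -- neither : value 0
      have h1 := habs u v
      have h2 : ¬ ∃ a, g x x₁ a v = 1 := fun h => hv ((memS x v).2 h)
      have h3 : ¬ ∃ b, g x x₁ b u = 1 := fun h => hu ((memS x u).2 h)
      have h4 : g x x₁ u v ≠ 1 := fun h => h2 ⟨u, h⟩
      have h5 : g x x₁ v u = - g x x₁ u v := alt2 x x₁ u v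
      have h6 : g x x₁ v u ≠ 1 := fun h => h3 ⟨v, h⟩
      omega
  -- the two-variable formula in terms of cut sets
  have formula2 : ∀ x y u v, g x y u v =
      ((if u ∈ S y then (1:ℤ) else 0) - (if u ∈ S x then 1 else 0))
      - ((if v ∈ S y then (1:ℤ) else 0) - (if v ∈ S x then 1 else 0)) := by
    intro x y u v
    have e1 : g x x₁ u v + g x₁ y u v = g x y u v := add1 x x₁ y u v
    have e2 : g y x₁ u v = - g x₁ y u v := alt1 x₁ y u v
    have c1 := cut x u v
    have c2 := cut y u v
    split_ifs at * <;> omega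
  -- the chain property
  have chain : ∀ x y, S x ⊆ S y ∨ S y ⊆ S x := by
    intro x y
    by_contra h
    push_neg at h
    obtain ⟨h1, h2⟩ := h
    rw [Finset.not_subset] at h1 h2
    obtain ⟨a, haX, haY⟩ := h1
    obtain ⟨b, hbY, hbX⟩ := h2
    have := formula2 x y a b
    have hb := bd x y a b
    rw [abs_le] at hb
    simp only [haX, haY, hbX, hbY, if_true, if_false] at this
    omega
  have Sx₁ : S x₁ = ∅ := by
    ext v
    simp only [memS, Finset.notMem_empty, iff_false]
    rintro ⟨u, hu⟩
    have : g x₁ x₁ u v = - g x₁ x₁ u v := alt1 x₁ x₁ u v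
    omega
  have Sproper : ∀ x, S x ≠ Finset.univ := by
    intro x hx
    obtain ⟨v₀⟩ := ‹Nonempty B›
    obtain ⟨u, hu⟩ := (memS x v₀).1 (hx ▸ Finset.mem_univ v₀)
    have := cut x u v₀
    simp only [hx, Finset.mem_univ, if_true] at this
    omega
  set 𝒞 : Finset (Finset B) := Finset.univ.image S with h𝒞
  have Smem : ∀ x, S x ∈ 𝒞 := fun x => Finset.mem_image_of_mem S (Finset.mem_univ x)
  have chainC : ∀ C ∈ 𝒞, ∀ D ∈ 𝒞, C ⊆ D ∨ D ⊆ C := by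
    intro C hC D hD
    obtain ⟨x, _, rfl⟩ := Finset.mem_image.1 hC
    obtain ⟨y, _, rfl⟩ := Finset.mem_image.1 hD
    exact chain x y
  have ssirr : ∀ C : Finset B, ¬ C ⊂ C := fun C h => h.2 h.1
  have ssub_of : ∀ C D : Finset B, C ⊆ D → C = D ∨ C ⊂ D := by
    intro C D h
    rcases eq_or_ne C D with h' | h'
    · exact Or.inl h'
    · exact Or.inr ⟨h, fun h2 => h' (Finset.Subset.antisymm h h2)⟩
  set ℓ : ℕ := 𝒞.card with hℓ
  set idx : Finset B → ℕ := fun C => (𝒞.filter (fun D => D ⊂ C)).card with hidx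
  have idx_lt : ∀ C ∈ 𝒞, idx C < ℓ := by
    intro C hC
    apply Finset.card_lt_card
    constructor
    · exact Finset.filter_subset _ _
    · intro hsub
      have := Finset.mem_filter.1 (hsub hC)
      exact ssirr C this.2
  have idx_mono : ∀ C ∈ 𝒞, ∀ D, C ⊂ D → idx C < idx D := by
    intro C hC D hCD
    apply Finset.card_lt_card
    constructor
    · intro E hE
      simp only [Finset.mem_filter] at hE ⊢
      exact ⟨hE.1, hE.2.trans hCD⟩
    · intro hsub
      have h1 : C ∈ 𝒞.filter (fun D' => D' ⊂ D) := Finset.mem_filter.2 ⟨hC, hCD⟩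
      have h2 := Finset.mem_filter.1 (hsub h1)
      exact ssirr C h2.2
  have idx_inj : ∀ C ∈ 𝒞, ∀ D ∈ 𝒞, idx C = idx D → C = D := by
    intro C hC D hD hEq
    rcases chainC C hC D hD with h | h
    · rcases ssub_of C D h with h' | h'
      · exact h'
      · exact absurd hEq (Nat.ne_of_lt (idx_mono C hC D h'))
    · rcases ssub_of D C h with h' | h'
      · exact h'.symm
      · exact absurd hEq.symm (Nat.ne_of_lt (idx_mono D hD C h'))
  set ν : B → ℕ := fun u => (𝒞.filter (fun D => u ∉ D)).card with hν
  have ν_pos : ∀ u, 1 ≤ ν u := by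
    intro u
    apply Finset.card_pos.2
    exact ⟨∅, Finset.mem_filter.2 ⟨Sx₁ ▸ Smem x₁, Finset.notMem_empty u⟩⟩
  have ν_le : ∀ u, ν u ≤ ℓ := fun u => Finset.card_le_card (Finset.filter_subset _ _)
  have mem_iff : ∀ u, ∀ C ∈ 𝒞, (u ∈ C ↔ ν u ≤ idx C) := by
    intro u C hC
    constructor
    · intro huC
      apply Finset.card_le_card
      intro D hD
      rw [Finset.mem_filter] at hD ⊢
      refine ⟨hD.1, ?_⟩
      have hsub : D ⊆ C := by
        rcases chainC C hC D hD.1 with h | h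
        · exact absurd (h huC) hD.2
        · exact h
      exact ⟨hsub, fun h2 => hD.2 (h2 huC)⟩
    · intro hle
      by_contra huC
      have hss : 𝒞.filter (fun D => D ⊂ C) ⊂ 𝒞.filter (fun D => u ∉ D) := by
        constructor
        · intro D hD
          simp only [Finset.mem_filter] at hD ⊢
          exact ⟨hD.1, fun huD => huC (hD.2.1 huD)⟩
        · intro hsub
          have hCmem : C ∈ 𝒞.filter (fun D => u ∉ D) := Finset.mem_filter.2 ⟨hC, huC⟩
          have hCC := Finset.mem_filter.1 (hsub hCmem)
          exact ssirr C hCC.2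
      have hcard : idx C < ν u := Finset.card_lt_card hss
      omega
  have ℓpos : 1 ≤ ℓ := Finset.card_pos.2 ⟨S x₁, Smem x₁⟩
  refine ⟨ℓ, ?_, ?_⟩
  · -- 2 ≤ ℓ
    obtain ⟨x, y, u, v, hne⟩ := nt
    have hSS : S x ≠ S y := by
      intro hEq
      apply hne
      have := formula2 x y u v
      rw [hEq] at this
      split_ifs at this <;> omega
    exact Finset.one_lt_card.2 ⟨S x, Smem x, S y, Smem y, hSS⟩
  · set s : A → Fin ℓ := fun x => ⟨idx (S x), idx_lt _ (Smem x)⟩ with hs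
    set t : B → Fin ℓ := fun u => ⟨ν u - 1, by have := ν_le u; have := ν_pos u; omega⟩ with ht
    have mem_iff' : ∀ u x, (u ∈ S x ↔ (t u : ℕ) < (s x : ℕ)) := by
      intro u x
      rw [mem_iff u (S x) (Smem x)]
      simp only [ht, hs]
      have := ν_pos u
      omega
    have hsurjC : ∀ i : Fin ℓ, ∃ C ∈ 𝒞, idx C = (i : ℕ) := by
      intro i
      have hinj : Function.Injective
          (fun C : {C // C ∈ 𝒞} => (⟨idx C.1, idx_lt _ C.2⟩ : Fin ℓ)) := by
        rintro ⟨C, hC⟩ ⟨D, hD⟩ hEq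
        simp only [Fin.mk.injEq] at hEq
        exact Subtype.ext (idx_inj C hC D hD hEq)
      have hcard : Fintype.card {C // C ∈ 𝒞} = Fintype.card (Fin ℓ) := by
        simp [Fintype.card_coe, hℓ]
      have hbij := (Fintype.bijective_iff_injective_and_card _).2 ⟨hinj, hcard⟩
      obtain ⟨⟨C, hC⟩, hCi⟩ := hbij.2 i
      refine ⟨C, hC, ?_⟩
      simpa [Fin.ext_iff] using hCi
    have hsurjS : Function.Surjective s := by
      intro i
      obtain ⟨C, hC, hCi⟩ := hsurjC i
      obtain ⟨x, _, rfl⟩ := Finset.mem_image.1 hC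
      exact ⟨x, Fin.ext hCi⟩
    have hsurjT : Function.Surjective t := by
      intro i
      obtain ⟨C, hC, hCi⟩ := hsurjC i
      by_cases htop : (i : ℕ) = ℓ - 1
      · -- take u outside C where idx C = ℓ - 1... need C with max index: any C works? no
        -- we need the C with idx C = ℓ-1
        obtain ⟨Cm, hCm, hCmi⟩ := hsurjC ⟨ℓ - 1, by omega⟩
        have hCproper : Cm ≠ Finset.univ := by
          obtain ⟨x, _, rfl⟩ := Finset.mem_image.1 hCm
          exact Sproper x
        obtain ⟨u, hu⟩ : ∃ u, u ∉ Cm := by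
          by_contra h
          push_neg at h
          exact hCproper (Finset.eq_univ_iff_forall.2 h)
        refine ⟨u, Fin.ext ?_⟩
        have h1 : ¬ (ν u ≤ idx Cm) := fun h => hu ((mem_iff u Cm hCm).2 h)
        have h2 := ν_le u
        have h3 := ν_pos u
        simp only [ht]
        simp only at hCmi
        omega
      · -- i + 1 < ℓ
        have hi1 : (i : ℕ) + 1 < ℓ := by have := i.2; omega
        obtain ⟨D, hD, hDi⟩ := hsurjC ⟨(i : ℕ) + 1, hi1⟩
        simp only at hDi
        have hCD : C ⊂ D := by
          rcases chainC C hC D hD with h | h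
          · rcases ssub_of C D h with h' | h'
            · exfalso; rw [h'] at hCi; omega
            · exact h'
          · rcases ssub_of D C h with h' | h'
            · exfalso; rw [h'] at hDi; omega
            · exfalso; have := idx_mono D hD C h'; omega
        obtain ⟨u, huD, huC⟩ := Finset.exists_of_ssubset hCD
        refine ⟨u, Fin.ext ?_⟩
        have h1 : ν u ≤ idx D := (mem_iff u D hD).1 huD
        have h2 : ¬ (ν u ≤ idx C) := fun h => huC ((mem_iff u C hC).2 h)
        have h3 := ν_pos u
        simp only [ht]
        omega
    refine ⟨s, t, hsurjS, hsurjT, ?_⟩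
    intro x y u v
    have e := formula2 x y u v
    simp only [mem_iff'] at e
    exact e

/-- main theorem, common-vertex case. -/
theorem main_common_vertex_case {V : Type*} {W : Type*} [Fintype V] [Fintype W]
    (hV : 5 ≤ Fintype.card V) (hW : 5 ≤ Fintype.card W)
    (lam : V → V → V → W → W → W → ℤ)
    (hbl : IsBilinking lam) (hwl : WeaklyLinked lam)
    (p : V) (q : W)
    (hp : ∀ a b c : V, p ∉ ({a, b, c} : Set V) →
        ∀ D : List W, IsCycle D → cycleVal (lam a b c) D = 0)
    (hq : ∀ u v w : W, q ∉ ({u, v, w} : Set W) →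
        ∀ C : List V, IsCycle C →
          cycleVal (fun a b c => lam a b c u v w) C = 0) :
    ∃ ℓ : ℕ, 2 ≤ ℓ ∧ ℓ ≤ min (Fintype.card V) (Fintype.card W) - 1 ∧
    ∃ (X : Fin ℓ → Set V) (Y : Fin ℓ → Set W),
      -- X is a partition of V − {p}
      (∀ i, (X i).Nonempty) ∧ (∀ i j, i ≠ j → Disjoint (X i) (X j)) ∧
      (⋃ i, X i) = ({p} : Set V)ᶜ ∧
      -- Y is a partition of W − {q}
      (∀ i, (Y i).Nonempty) ∧ (∀ i j, i ≠ j → Disjoint (Y i) (Y j)) ∧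
      (⋃ i, Y i) = ({q} : Set W)ᶜ ∧
      -- (i) a triangle (p,x,y) links W iff x and y lie in different parts
      (∀ x y : V, x ≠ p → y ≠ p → x ≠ y →
        ((∃ D : List W, IsCycle D ∧ cycleVal (lam p x y) D ≠ 0) ↔
          ¬ ∃ i, x ∈ X i ∧ y ∈ X i)) ∧
      -- (ii) a triangle (q,u,v) links V iff u and v lie in different parts
      (∀ u v : W, u ≠ q → v ≠ q → u ≠ v →
        ((∃ C : List V, IsCycle C ∧
            cycleVal (fun a b c => lam a b c q u v) C ≠ 0) ↔
          ¬ ∃ i, u ∈ Y i ∧ v ∈ Y i)) ∧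
      -- (iii) the star linked by (p, x_j, x_k) for j < k
      (∀ j k : Fin ℓ, j < k → ∀ xj ∈ X j, ∀ xk ∈ X k,
        lam p xj xk =
          starFun q (⋃ i ∈ Finset.Ico j k, Y i)
            ((insert q (⋃ i ∈ Finset.Ico j k, Y i))ᶜ)) ∧
      -- (iv) the star linked by (q, y_j, y_k) for j < k
      (∀ j k : Fin ℓ, j < k → ∀ yj ∈ Y j, ∀ yk ∈ Y k,
        (fun a b c => lam a b c q yj yk) =
          starFun p ((insert p (⋃ i ∈ Finset.Ioc j k, X i))ᶜ)
            (⋃ i ∈ Finset.Ioc j k, X i)) := by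
  classical
  -- pointwise vanishing off p
  have zp : ∀ a b c : V, ∀ u v w : W, a ≠ p → b ≠ p → c ≠ p → lam a b c u v w = 0 := by
    intro a b c u v w ha hb hc
    have hmem : p ∉ ({a, b, c} : Set V) := by
      simp only [Set.mem_insert_iff, Set.mem_singleton_iff]
      push_neg
      exact ⟨Ne.symm ha, Ne.symm hb, Ne.symm hc⟩
    by_cases huv : u = v
    · rw [huv]; exact myAlt_self1 (lam a b c) (hbl.2 a b c).1 v w
    by_cases huw : u = w
    · rw [← huw]; exact myAlt_self3 (lam a b c) (hbl.2 a b c).1 u v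
    by_cases hvw : v = w
    · rw [hvw]; exact myAlt_self2 (lam a b c) (hbl.2 a b c).1 u w
    · have h := hp a b c hmem [u, v, w] (myIsCycle_triangle u v w huv huw hvw)
      rwa [myCycleVal_triangle] at h
  -- pointwise vanishing off q
  have zq : ∀ a b c : V, ∀ u v w : W, u ≠ q → v ≠ q → w ≠ q → lam a b c u v w = 0 := by
    intro a b c u v w hu hv hw
    have hmem : q ∉ ({u, v, w} : Set W) := by
      simp only [Set.mem_insert_iff, Set.mem_singleton_iff]
      push_neg
      exact ⟨Ne.symm hu, Ne.symm hv, Ne.symm hw⟩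
    by_cases hab : a = b
    · rw [hab]; exact myAlt_self1 (fun a b c => lam a b c u v w) (hbl.1 u v w).1 b c
    by_cases hac : a = c
    · rw [← hac]; exact myAlt_self3 (fun a b c => lam a b c u v w) (hbl.1 u v w).1 a b
    by_cases hbc : b = c
    · rw [hbc]; exact myAlt_self2 (fun a b c => lam a b c u v w) (hbl.1 u v w).1 a c
    · have h := hq u v w hmem [a, b, c] (myIsCycle_triangle a b c hab hac hbc)
      rwa [myCycleVal_triangle] at h
  -- cardinalities
  have cardA : Fintype.card {x : V // x ≠ p} = Fintype.card V - 1 := by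
    rw [Fintype.card_subtype_compl, Fintype.card_subtype_eq]
  have cardB : Fintype.card {u : W // u ≠ q} = Fintype.card W - 1 := by
    rw [Fintype.card_subtype_compl, Fintype.card_subtype_eq]
  haveI hNA : Nonempty {x : V // x ≠ p} := Fintype.card_pos_iff.1 (by omega)
  haveI hNB : Nonempty {u : W // u ≠ q} := Fintype.card_pos_iff.1 (by omega)
  -- the premises of core
  have alt1 : ∀ (x y : {x : V // x ≠ p}) (u v : {u : W // u ≠ q}),
      lam p y.1 x.1 q u.1 v.1 = - lam p x.1 y.1 q u.1 v.1 := by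
    intro x y u v
    exact (hbl.1 q u.1 v.1).1.2 p x.1 y.1
  have alt2 : ∀ (x y : {x : V // x ≠ p}) (u v : {u : W // u ≠ q}),
      lam p x.1 y.1 q v.1 u.1 = - lam p x.1 y.1 q u.1 v.1 := by
    intro x y u v
    exact (hbl.2 p x.1 y.1).1.2 q u.1 v.1
  have add1 : ∀ (x y z : {x : V // x ≠ p}) (u v : {u : W // u ≠ q}),
      lam p x.1 y.1 q u.1 v.1 + lam p y.1 z.1 q u.1 v.1 = lam p x.1 z.1 q u.1 v.1 := by
    intro x y z u v
    have hco : lam p y.1 z.1 q u.1 v.1 - lam x.1 y.1 z.1 q u.1 v.1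
        + lam x.1 p z.1 q u.1 v.1 - lam x.1 p y.1 q u.1 v.1 = 0 :=
      (hbl.1 q u.1 v.1).2 x.1 p y.1 z.1
    have h0 : lam x.1 y.1 z.1 q u.1 v.1 = 0 := zp _ _ _ _ _ _ x.2 y.2 z.2
    have h1 : lam x.1 p z.1 q u.1 v.1 = - lam p x.1 z.1 q u.1 v.1 :=
      (hbl.1 q u.1 v.1).1.1 p x.1 z.1
    have h2 : lam x.1 p y.1 q u.1 v.1 = - lam p x.1 y.1 q u.1 v.1 :=
      (hbl.1 q u.1 v.1).1.1 p x.1 y.1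
    omega
  have add2 : ∀ (x y : {x : V // x ≠ p}) (u v w : {u : W // u ≠ q}),
      lam p x.1 y.1 q u.1 v.1 + lam p x.1 y.1 q v.1 w.1 = lam p x.1 y.1 q u.1 w.1 := by
    intro x y u v w
    have hco : lam p x.1 y.1 q v.1 w.1 - lam p x.1 y.1 u.1 v.1 w.1
        + lam p x.1 y.1 u.1 q w.1 - lam p x.1 y.1 u.1 q v.1 = 0 :=
      (hbl.2 p x.1 y.1).2 u.1 q v.1 w.1
    have h0 : lam p x.1 y.1 u.1 v.1 w.1 = 0 := zq _ _ _ _ _ _ u.2 v.2 w.2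
    have h1 : lam p x.1 y.1 u.1 q w.1 = - lam p x.1 y.1 q u.1 w.1 :=
      (hbl.2 p x.1 y.1).1.1 q u.1 w.1
    have h2 : lam p x.1 y.1 u.1 q v.1 = - lam p x.1 y.1 q u.1 v.1 :=
      (hbl.2 p x.1 y.1).1.1 q u.1 v.1
    omega
  have bd : ∀ (x y : {x : V // x ≠ p}) (u v : {u : W // u ≠ q}),
      |lam p x.1 y.1 q u.1 v.1| ≤ 1 := by
    intro x y u v
    by_cases hxy : x.1 = y.1
    · have h := alt1 x y u v
      rw [hxy] at h ⊢
      have : lam p y.1 y.1 q u.1 v.1 = 0 := by omega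
      rw [this]; norm_num
    by_cases huv : u.1 = v.1
    · have h := alt2 x y u v
      rw [huv] at h ⊢
      have : lam p x.1 y.1 q v.1 v.1 = 0 := by omega
      rw [this]; norm_num
    · have hC : IsCycle [p, x.1, y.1] :=
        myIsCycle_triangle _ _ _ (Ne.symm x.2) (Ne.symm y.2) hxy
      have hD : IsCycle [q, u.1, v.1] :=
        myIsCycle_triangle _ _ _ (Ne.symm u.2) (Ne.symm v.2) huv
      have h := hwl.1 [p, x.1, y.1] [q, u.1, v.1] hC hD
      have e1 : biCycleVal lam [p, x.1, y.1] [q, u.1, v.1] = lam p x.1 y.1 q u.1 v.1 := by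
        unfold biCycleVal
        rw [myCycleVal_triangle (fun a b c => cycleVal (lam a b c) [q, u.1, v.1]) p x.1 y.1]
        exact myCycleVal_triangle (lam p x.1 y.1) q u.1 v.1
      rwa [e1] at h
  have nt : ∃ (x y : {x : V // x ≠ p}) (u v : {u : W // u ≠ q}),
      lam p x.1 y.1 q u.1 v.1 ≠ 0 := by
    by_contra hcon
    push_neg at hcon
    obtain ⟨C, D, hC, hD, hval⟩ := hwl.2
    apply hval
    have hA : ∀ (x y : V) (u v : W), lam p x y q u v = 0 := by
      intro x y u v
      by_cases hx : x = p
      · rw [hx]; exact myAlt_self1 (fun a b c => lam a b c q u v) (hbl.1 q u v).1 p y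
      by_cases hy : y = p
      · rw [hy]; exact myAlt_self3 (fun a b c => lam a b c q u v) (hbl.1 q u v).1 p x
      by_cases hu : u = q
      · rw [hu]; exact myAlt_self1 (lam p x y) (hbl.2 p x y).1 q v
      by_cases hv : v = q
      · rw [hv]; exact myAlt_self3 (lam p x y) (hbl.2 p x y).1 q u
      · exact hcon ⟨x, hx⟩ ⟨y, hy⟩ ⟨u, hu⟩ ⟨v, hv⟩
    have hB : ∀ (x y : V) (u v w : W), lam p x y u v w = 0 := by
      intro x y u v w
      rw [myExpand q (lam p x y) (hbl.2 p x y).1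
        (fun u v w hu hv hw => zq p x y u v w hu hv hw) u v w]
      simp [hA]
    have hAll : ∀ (a b c : V) (u v w : W), lam a b c u v w = 0 := by
      intro a b c u v w
      rw [myExpand p (fun a b c => lam a b c u v w) (hbl.1 u v w).1
        (fun a b c ha hb hc => zp a b c u v w ha hb hc) a b c]
      simp [hB]
    unfold biCycleVal
    apply myCycleVal_zero
    intro a b c
    apply myCycleVal_zero
    intro u v w
    exact hAll a b c u v w
  obtain ⟨ℓ, hℓ2, s, t, hsurjS, hsurjT, hform⟩ :=
    core (fun (x y : {x : V // x ≠ p}) (u v : {u : W // u ≠ q}) => lam p x.1 y.1 q u.1 v.1)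
      alt1 alt2 add1 add2 bd nt
  have hℓA : ℓ ≤ Fintype.card V - 1 := by
    have := Fintype.card_le_of_surjective s hsurjS
    rw [Fintype.card_fin] at this
    omega
  have hℓB : ℓ ≤ Fintype.card W - 1 := by
    have := Fintype.card_le_of_surjective t hsurjT
    rw [Fintype.card_fin] at this
    omega
  refine ⟨ℓ, hℓ2, by omega, fun i => {x : V | ∃ h : x ≠ p, s ⟨x, h⟩ = i},
    fun i => {u : W | ∃ h : u ≠ q, t ⟨u, h⟩ = i}, ?_, ?_, ?_, ?_, ?_, ?_, ?_, ?_, ?_, ?_⟩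
  · -- X nonempty
    intro i
    obtain ⟨⟨x, hx⟩, hsx⟩ := hsurjS i
    exact ⟨x, hx, hsx⟩
  · -- X disjoint
    intro i j hij
    rw [Set.disjoint_left]
    rintro x ⟨h1, h2⟩ ⟨h1', h2'⟩
    exact hij (by rw [← h2, ← h2'])
  · -- X union
    ext x
    simp only [Set.mem_iUnion, Set.mem_setOf_eq, Set.mem_compl_iff, Set.mem_singleton_iff]
    constructor
    · rintro ⟨i, h, _⟩; exact h
    · intro h; exact ⟨s ⟨x, h⟩, h, rfl⟩
  · -- Y nonempty
    intro i
    obtain ⟨⟨u, hu⟩, htu⟩ := hsurjT i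
    exact ⟨u, hu, htu⟩
  · -- Y disjoint
    intro i j hij
    rw [Set.disjoint_left]
    rintro u ⟨h1, h2⟩ ⟨h1', h2'⟩
    exact hij (by rw [← h2, ← h2'])
  · -- Y union
    ext u
    simp only [Set.mem_iUnion, Set.mem_setOf_eq, Set.mem_compl_iff, Set.mem_singleton_iff]
    constructor
    · rintro ⟨i, h, _⟩; exact h
    · intro h; exact ⟨t ⟨u, h⟩, h, rfl⟩
  · -- (i)
    intro x y hx hy hxy
    constructor
    · rintro ⟨D, hD, hval⟩ ⟨i, ⟨hx1, hx2⟩, ⟨hy1, hy2⟩⟩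
      apply hval
      apply myCycleVal_zero
      intro u v w
      -- lam p x y u v w = 0 when s-values agree
      have hs : s ⟨x, hx1⟩ = s ⟨y, hy1⟩ := by rw [hx2, hy2]
      rw [myExpand q (lam p x y) (hbl.2 p x y).1
        (fun u v w hu hv hw => zq p x y u v w hu hv hw) u v w]
      have hq0 : ∀ a b : W, lam p x y q a b = 0 := by
        intro a b
        by_cases ha : a = q
        · rw [ha]; exact myAlt_self1 (lam p x y) (hbl.2 p x y).1 q b
        by_cases hb : b = q
        · rw [hb]; exact myAlt_self3 (lam p x y) (hbl.2 p x y).1 q a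
        · have h := hform ⟨x, hx1⟩ ⟨y, hy1⟩ ⟨a, ha⟩ ⟨b, hb⟩
          rw [hs] at h
          rw [h]; ring
      simp [hq0]
    · intro hne
      have hsne : (s ⟨x, hx⟩ : ℕ) ≠ (s ⟨y, hy⟩ : ℕ) := by
        intro hEq
        exact hne ⟨s ⟨x, hx⟩, ⟨hx, rfl⟩, ⟨hy, (Fin.ext hEq).symm⟩⟩
      have hxl := (s ⟨x, hx⟩).isLt
      have hyl := (s ⟨y, hy⟩).isLt
      obtain ⟨u, hu⟩ := hsurjT ⟨min (s ⟨x, hx⟩ : ℕ) (s ⟨y, hy⟩ : ℕ), by omega⟩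
      obtain ⟨v, hv⟩ := hsurjT ⟨ℓ - 1, by omega⟩
      have hu' : (t u : ℕ) = min (s ⟨x, hx⟩ : ℕ) (s ⟨y, hy⟩ : ℕ) := by rw [hu]
      have hv' : (t v : ℕ) = ℓ - 1 := by rw [hv]
      have huv : u.1 ≠ v.1 := by
        intro h
        have h2 : u = v := Subtype.ext h
        rw [h2] at hu'
        omega
      refine ⟨[q, u.1, v.1],
        myIsCycle_triangle _ _ _ (Ne.symm u.2) (Ne.symm v.2) huv, ?_⟩
      rw [myCycleVal_triangle]
      have h := hform ⟨x, hx⟩ ⟨y, hy⟩ u v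
      rw [h]
      split_ifs <;> omega
  · -- (ii)
    intro u v hu hv huv
    constructor
    · rintro ⟨C, hC, hval⟩ ⟨i, ⟨hu1, hu2⟩, ⟨hv1, hv2⟩⟩
      apply hval
      apply myCycleVal_zero
      intro a b c
      have ht : t ⟨u, hu1⟩ = t ⟨v, hv1⟩ := by rw [hu2, hv2]
      rw [myExpand p (fun a b c => lam a b c q u v) (hbl.1 q u v).1
        (fun a b c ha hb hc => zp a b c q u v ha hb hc) a b c]
      have hp0 : ∀ a b : V, lam p a b q u v = 0 := by
        intro a b
        by_cases ha : a = p
        · rw [ha]; exact myAlt_self1 (fun a b c => lam a b c q u v) (hbl.1 q u v).1 p b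
        by_cases hb : b = p
        · rw [hb]; exact myAlt_self3 (fun a b c => lam a b c q u v) (hbl.1 q u v).1 p a
        · have h := hform ⟨a, ha⟩ ⟨b, hb⟩ ⟨u, hu1⟩ ⟨v, hv1⟩
          rw [ht] at h
          rw [h]; ring
      simp [hp0]
    · intro hne
      have htne : (t ⟨u, hu⟩ : ℕ) ≠ (t ⟨v, hv⟩ : ℕ) := by
        intro hEq
        exact hne ⟨t ⟨u, hu⟩, ⟨hu, rfl⟩, ⟨hv, (Fin.ext hEq).symm⟩⟩
      have hul := (t ⟨u, hu⟩).isLt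
      have hvl := (t ⟨v, hv⟩).isLt
      obtain ⟨x, hx⟩ := hsurjS ⟨min (t ⟨u, hu⟩ : ℕ) (t ⟨v, hv⟩ : ℕ) + 1, by omega⟩
      obtain ⟨y, hy⟩ := hsurjS ⟨0, by omega⟩
      have hx' : (s x : ℕ) = min (t ⟨u, hu⟩ : ℕ) (t ⟨v, hv⟩ : ℕ) + 1 := by rw [hx]
      have hy' : (s y : ℕ) = 0 := by rw [hy]
      have hxy : x.1 ≠ y.1 := by
        intro h
        have h2 : x = y := Subtype.ext h
        rw [h2] at hx'
        omega
      refine ⟨[p, x.1, y.1],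
        myIsCycle_triangle _ _ _ (Ne.symm x.2) (Ne.symm y.2) hxy, ?_⟩
      rw [myCycleVal_triangle (fun a b c => lam a b c q u v) p x.1 y.1]
      show lam p x.1 y.1 q u v ≠ 0
      have h := hform x y ⟨u, hu⟩ ⟨v, hv⟩
      rw [h]
      split_ifs <;> omega
  · -- (iii)
    intro j k hjk xj hxj xk hxk
    obtain ⟨hxjp, hsj⟩ := hxj
    obtain ⟨hxkp, hsk⟩ := hxk
    have hjk' : (j : ℕ) < (k : ℕ) := hjk
    show lam p xj xk = starFun q
      (⋃ i ∈ Finset.Ico j k, {u : W | ∃ h : u ≠ q, t ⟨u, h⟩ = i})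
      ((insert q (⋃ i ∈ Finset.Ico j k, {u : W | ∃ h : u ≠ q, t ⟨u, h⟩ = i}))ᶜ)
    set O : Set W := ⋃ i ∈ Finset.Ico j k, {u : W | ∃ h : u ≠ q, t ⟨u, h⟩ = i} with hOdef
    set I : Set W := (insert q O)ᶜ with hIdef
    have hO : ∀ c : W, c ∈ O ↔ ∃ h : c ≠ q, (j : ℕ) ≤ (t ⟨c, h⟩ : ℕ) ∧ (t ⟨c, h⟩ : ℕ) < (k : ℕ) := by
      intro c
      rw [hOdef]
      simp only [Set.mem_iUnion, Set.mem_setOf_eq, Finset.mem_Ico, Fin.le_def, Fin.lt_def]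
      constructor
      · rintro ⟨i, ⟨hji, hik⟩, hc, hti⟩
        refine ⟨hc, ?_, ?_⟩ <;> rw [hti] <;> assumption
      · rintro ⟨hc, h1, h2⟩
        exact ⟨t ⟨c, hc⟩, ⟨h1, h2⟩, hc, rfl⟩
    have hqO : q ∉ O := by
      intro hmem
      obtain ⟨hq', _⟩ := (hO q).1 hmem
      exact hq' rfl
    have hqI : q ∉ I := by
      rw [hIdef]
      simp
    have key : ∀ a b : W, lam p xj xk q a b = starEdge O I a b := by
      intro a b
      by_cases ha : a = q
      · rw [ha]
        have h1 : lam p xj xk q q b = 0 := myAlt_self1 (lam p xj xk) (hbl.2 p xj xk).1 q b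
        rw [h1, starEdge]
        simp [hqO, hqI]
      by_cases hb : b = q
      · rw [hb]
        have h1 : lam p xj xk q a q = 0 := myAlt_self3 (lam p xj xk) (hbl.2 p xj xk).1 q a
        rw [h1, starEdge]
        simp [hqO, hqI]
      · have hfa := hform ⟨xj, hxjp⟩ ⟨xk, hxkp⟩ ⟨a, ha⟩ ⟨b, hb⟩
        rw [hsj, hsk] at hfa
        have haO : a ∈ O ↔ ((j : ℕ) ≤ (t ⟨a, ha⟩ : ℕ) ∧ (t ⟨a, ha⟩ : ℕ) < (k : ℕ)) := by
          rw [hO a]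
          exact ⟨fun ⟨h', hh⟩ => hh, fun hh => ⟨ha, hh⟩⟩
        have hbO : b ∈ O ↔ ((j : ℕ) ≤ (t ⟨b, hb⟩ : ℕ) ∧ (t ⟨b, hb⟩ : ℕ) < (k : ℕ)) := by
          rw [hO b]
          exact ⟨fun ⟨h', hh⟩ => hh, fun hh => ⟨hb, hh⟩⟩
        have haI : a ∈ I ↔ ¬((j : ℕ) ≤ (t ⟨a, ha⟩ : ℕ) ∧ (t ⟨a, ha⟩ : ℕ) < (k : ℕ)) := by
          rw [hIdef]
          simp only [Set.mem_compl_iff, Set.mem_insert_iff, ha, false_or, haO]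
        have hbI : b ∈ I ↔ ¬((j : ℕ) ≤ (t ⟨b, hb⟩ : ℕ) ∧ (t ⟨b, hb⟩ : ℕ) < (k : ℕ)) := by
          rw [hIdef]
          simp only [Set.mem_compl_iff, Set.mem_insert_iff, hb, false_or, hbO]
        rw [starEdge, hfa]
        simp only [haO, hbO, haI, hbI]
        split_ifs <;> omega
    funext u v w
    rw [myExpand q (lam p xj xk) (hbl.2 p xj xk).1
      (fun a b c ha hb hc => zq p xj xk a b c ha hb hc) u v w, starFun]
    simp only [key]
  · -- (iv)
    intro j k hjk yj hyj yk hyk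
    obtain ⟨hyjq, htj⟩ := hyj
    obtain ⟨hykq, htk⟩ := hyk
    have hjk' : (j : ℕ) < (k : ℕ) := hjk
    show (fun a b c => lam a b c q yj yk) = starFun p
      ((insert p (⋃ i ∈ Finset.Ioc j k, {x : V | ∃ h : x ≠ p, s ⟨x, h⟩ = i}))ᶜ)
      (⋃ i ∈ Finset.Ioc j k, {x : V | ∃ h : x ≠ p, s ⟨x, h⟩ = i})
    set J : Set V := ⋃ i ∈ Finset.Ioc j k, {x : V | ∃ h : x ≠ p, s ⟨x, h⟩ = i} with hJdef
    set P : Set V := (insert p J)ᶜ with hPdef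
    have hJ : ∀ c : V, c ∈ J ↔ ∃ h : c ≠ p, (j : ℕ) < (s ⟨c, h⟩ : ℕ) ∧ (s ⟨c, h⟩ : ℕ) ≤ (k : ℕ) := by
      intro c
      rw [hJdef]
      simp only [Set.mem_iUnion, Set.mem_setOf_eq, Finset.mem_Ioc, Fin.le_def, Fin.lt_def]
      constructor
      · rintro ⟨i, ⟨hji, hik⟩, hc, hsi⟩
        refine ⟨hc, ?_, ?_⟩ <;> rw [hsi] <;> assumption
      · rintro ⟨hc, h1, h2⟩
        exact ⟨s ⟨c, hc⟩, ⟨h1, h2⟩, hc, rfl⟩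
    have hpJ : p ∉ J := by
      intro hmem
      obtain ⟨hp', _⟩ := (hJ p).1 hmem
      exact hp' rfl
    have hpP : p ∉ P := by
      rw [hPdef]
      simp
    have key : ∀ a b : V, lam p a b q yj yk = starEdge P J a b := by
      intro a b
      by_cases ha : a = p
      · rw [ha]
        have h1 : lam p p b q yj yk = 0 :=
          myAlt_self1 (fun a b c => lam a b c q yj yk) (hbl.1 q yj yk).1 p b
        rw [h1, starEdge]
        simp [hpP, hpJ]
      by_cases hb : b = p
      · rw [hb]
        have h1 : lam p a p q yj yk = 0 :=
          myAlt_self3 (fun a b c => lam a b c q yj yk) (hbl.1 q yj yk).1 p a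
        rw [h1, starEdge]
        simp [hpP, hpJ]
      · have hfa := hform ⟨a, ha⟩ ⟨b, hb⟩ ⟨yj, hyjq⟩ ⟨yk, hykq⟩
        rw [htj, htk] at hfa
        have haJ : a ∈ J ↔ ((j : ℕ) < (s ⟨a, ha⟩ : ℕ) ∧ (s ⟨a, ha⟩ : ℕ) ≤ (k : ℕ)) := by
          rw [hJ a]
          exact ⟨fun ⟨h', hh⟩ => hh, fun hh => ⟨ha, hh⟩⟩
        have hbJ : b ∈ J ↔ ((j : ℕ) < (s ⟨b, hb⟩ : ℕ) ∧ (s ⟨b, hb⟩ : ℕ) ≤ (k : ℕ)) := by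
          rw [hJ b]
          exact ⟨fun ⟨h', hh⟩ => hh, fun hh => ⟨hb, hh⟩⟩
        have haP : a ∈ P ↔ ¬((j : ℕ) < (s ⟨a, ha⟩ : ℕ) ∧ (s ⟨a, ha⟩ : ℕ) ≤ (k : ℕ)) := by
          rw [hPdef]
          simp only [Set.mem_compl_iff, Set.mem_insert_iff, ha, false_or, haJ]
        have hbP : b ∈ P ↔ ¬((j : ℕ) < (s ⟨b, hb⟩ : ℕ) ∧ (s ⟨b, hb⟩ : ℕ) ≤ (k : ℕ)) := by
          rw [hPdef]
          simp only [Set.mem_compl_iff, Set.mem_insert_iff, hb, false_or, hbJ]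
        rw [starEdge, hfa]
        simp only [haJ, hbJ, haP, hbP]
        split_ifs <;> omega
    funext a b c
    rw [myExpand p (fun a b c => lam a b c q yj yk) (hbl.1 q yj yk).1
      (fun a b c ha hb hc => zp a b c q yj yk ha hb hc) a b c, starFun]
    simp only [key]
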